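/- Let α₀ > 0, β₀ ∈ ℝ, λ ∈ ℝ, and let r solve the ODE r'' = α₀²/r³ + 2λα₀/r with r(0) = 1, r'(0) = −β₀, on its maximal interval of existence in positive time. Then r satisfies the first integral (r'(t))² = β₀² + α₀² − α₀²/r(t)² + 4λα₀ ln r(t), there exists δ > 0 with r(t) ≥ δ for all t in the interval, and the solution is global in positive time. -/

import Mathlib

open Set
open scoped NNReal

variable {E : Type*} [NormedAddCommGroup E] [NormedSpace ℝ E] [CompleteSpace E]

/-- Uniform-time local existence for a globally Lipschitz autonomous field. -/
lemma local_sol {F : E → E} {K : ℝ≥0} (hF : LipschitzWith K F) (t₀ : ℝ) (p : E) :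
    ∃ u : ℝ → E, u t₀ = p ∧ ∀ t ∈ Ioo (t₀ - (2*((K:ℝ)+1))⁻¹) (t₀ + (2*((K:ℝ)+1))⁻¹),
      HasDerivAt u (F (u t)) t := by
  set Kr : ℝ := (K:ℝ) + 1 with hKr
  have hKrpos : 0 < Kr := by positivity
  set ε : ℝ := (2*Kr)⁻¹ with hε
  have hεpos : 0 < ε := by positivity
  set R : ℝ := (‖F p‖ + 1) / Kr with hR
  have hRpos : 0 < R := by positivity
  set C : ℝ := 2*‖F p‖ + 1 with hC
  have hKK : (K:ℝ) ≤ Kr := by simp [hKr]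
  have hpl : IsPicardLindelof (fun _ : ℝ => F) (tmin := t₀ - ε) (tmax := t₀ + ε)
      ⟨t₀, by constructor <;> linarith⟩ p ⟨R, hRpos.le⟩ 0 ⟨C, by positivity⟩ ⟨Kr, hKrpos.le⟩ := by
    refine ⟨?_, ?_, ?_, ?_⟩
    · intro t _
      have h := hF.weaken (K' := ⟨Kr, hKrpos.le⟩) (NNReal.coe_le_coe.mp hKK)
      exact fun x _ y _ => h x y
    · intro x _; exact continuousOn_const
    · intro t _ x hx
      show ‖F x‖ ≤ C
      have h1 : ‖F x - F p‖ ≤ (K:ℝ) * ‖x - p‖ := by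
        simpa [dist_eq_norm] using hF.dist_le_mul x p
      have h2 : ‖x - p‖ ≤ R := by
        have := Metric.mem_closedBall.mp hx; rw [dist_eq_norm] at this; exact this
      have h3 : (K:ℝ) * ‖x - p‖ ≤ Kr * R := by
        apply mul_le_mul hKK h2 (norm_nonneg _) hKrpos.le
      have h4 : Kr * R = ‖F p‖ + 1 := by rw [hR]; field_simp
      have h5 : ‖F x‖ ≤ ‖F p‖ + ‖F x - F p‖ := by
        have := norm_add_le (F p) (F x - F p)
        simpa using this
      rw [hC]; linarith
    · have hmax : max (t₀ + ε - t₀) (t₀ - (t₀ - ε)) = ε := by simp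
      show C * max (t₀ + ε - t₀) (t₀ - (t₀ - ε)) ≤ R - ((0 : ℝ≥0) : ℝ)
      rw [NNReal.coe_zero, sub_zero]
      rw [hmax]
      have hCε : C * ε = C / (2*Kr) := by rw [hε]; ring
      rw [hCε, hR, div_le_div_iff₀ (by positivity) hKrpos]
      nlinarith [norm_nonneg (F p)]
  obtain ⟨u, hu0, hu⟩ := hpl.exists_eq_forall_mem_Icc_hasDerivWithinAt₀
  exact ⟨u, hu0, fun t ht => (hu t (Ioo_subset_Icc_self ht)).hasDerivAt
    (Icc_mem_nhds ht.1 ht.2)⟩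

/-- Uniqueness of solutions on an open interval for a globally Lipschitz field. -/
lemma uniq_sol {F : E → E} {K : ℝ≥0} (hF : LipschitzWith K F) {u w : ℝ → E} {a b t₀ : ℝ}
    (ht₀ : t₀ ∈ Ioo a b)
    (hu : ∀ t ∈ Ioo a b, HasDerivAt u (F (u t)) t)
    (hw : ∀ t ∈ Ioo a b, HasDerivAt w (F (w t)) t)
    (heq : u t₀ = w t₀) : EqOn u w (Ioo a b) := by
  apply ODE_solution_unique_of_mem_Ioo (v := fun _ x => F x) (s := fun _ => univ) (K := K)
    (fun _ _ => fun x _ y _ => hF x y) ht₀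
    (fun t ht => ⟨hu t ht, mem_univ _⟩) (fun t ht => ⟨hw t ht, mem_univ _⟩) heq

/-- Global (forward and slightly backward) existence for a globally Lipschitz field. -/
lemma global_sol {F : E → E} {K : ℝ≥0} (hF : LipschitzWith K F) (p₀ : E) :
    ∃ u : ℝ → E, ∃ c : ℝ, 0 < c ∧ u 0 = p₀ ∧ ∀ t : ℝ, -c < t → HasDerivAt u (F (u t)) t := by
  set ε : ℝ := (2*((K:ℝ)+1))⁻¹ with hε
  have hεpos : 0 < ε := by positivity
  set δ : ℝ := ε/2 with hδ
  have hδpos : 0 < δ := by positivity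
  have hδε : δ < ε := by rw [hδ]; linarith
  -- solutions on larger and larger intervals
  have key : ∀ n : ℕ, ∃ u : ℝ → E, u 0 = p₀ ∧
      ∀ t ∈ Ioo (-ε) (n*δ + ε), HasDerivAt u (F (u t)) t := by
    intro n
    induction n with
    | zero =>
      obtain ⟨u, hu0, hu⟩ := local_sol hF 0 p₀
      refine ⟨u, hu0, fun t ht => hu t ?_⟩
      have h1 := ht.1
      have h2 := ht.2
      simp only [Nat.cast_zero, zero_mul, zero_add] at h2
      rw [← hε] at *
      exact ⟨by linarith, by linarith⟩
    | succ n ih =>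
      obtain ⟨u, hu0, hu⟩ := ih
      set T : ℝ := n*δ + δ with hT
      have hT0 : 0 < T := by positivity
      have hTlt : T < (n:ℝ)*δ + ε := by rw [hT]; linarith
      obtain ⟨w, hw0, hw⟩ := local_sol hF T (u T)
      rw [← hε] at hw
      -- the two agree on the overlap
      have hover : EqOn u w (Ioo (T - ε) ((n:ℝ)*δ + ε)) := by
        apply uniq_sol hF (t₀ := T) ⟨by linarith, hTlt⟩
        · intro t ht
          exact hu t ⟨by have := ht.1; linarith, ht.2⟩
        · intro t ht
          exact hw t ⟨ht.1, by have := ht.2; rw [hT] at *; linarith⟩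
        · exact hw0.symm
      refine ⟨fun t => if t < T then u t else w t, by simp [hT0, hu0], ?_⟩
      intro t ht
      have hub : t < ((n:ℕ)+1 : ℝ)*δ + ε := by exact_mod_cast ht.2
      have hub' : t < T + ε := by rw [hT]; push_cast at hub; linarith
      rcases lt_or_ge t T with h | h
      · have hev : (fun s => if s < T then u s else w s) =ᶠ[nhds t] u := by
          filter_upwards [Iio_mem_nhds h] with s hs
          simp only [mem_Iio] at hs
          simp [hs]
        have hder := hu t ⟨ht.1, lt_trans h hTlt⟩
        have h2 := hder.congr_of_eventuallyEq hev
        simpa [h] using h2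
      · have hev : (fun s => if s < T then u s else w s) =ᶠ[nhds t] w := by
          filter_upwards [Ioo_mem_nhds (show T - ε < t by linarith) (lt_add_one t)] with s hs
          by_cases h' : s < T
          · simp only [if_pos h']
            exact hover ⟨hs.1, lt_trans h' hTlt⟩
          · simp [h']
        have hder : HasDerivAt w (F (w t)) t := hw t ⟨by linarith, hub'⟩
        have h2 := hder.congr_of_eventuallyEq hev
        simpa [not_lt.mpr h] using h2
  choose uu huu0 huu using key
  -- consistency
  have hcons : ∀ (m n : ℕ) (t : ℝ), t ∈ Ioo (-ε) ((n:ℝ)*δ + ε) → t ∈ Ioo (-ε) ((m:ℝ)*δ + ε) →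
      uu n t = uu m t := by
    intro m n t htn htm
    have h0 : (0:ℝ) ∈ Ioo (-ε) (min ((n:ℝ)*δ + ε) ((m:ℝ)*δ + ε)) := by
      refine ⟨by linarith, lt_min (by positivity) (by positivity)⟩
    have := uniq_sol hF (t₀ := 0) h0
      (fun s hs => huu n s ⟨hs.1, lt_of_lt_of_le hs.2 (min_le_left _ _)⟩)
      (fun s hs => huu m s ⟨hs.1, lt_of_lt_of_le hs.2 (min_le_right _ _)⟩)
      (by rw [huu0 n, huu0 m])
    exact this ⟨htn.1, lt_min htn.2 htm.2⟩
  -- the glued global solution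
  set N : ℝ → ℕ := fun t => Nat.floor (max t 0 / δ) + 1 with hN
  have hdom : ∀ t : ℝ, -δ < t → t ∈ Ioo (-ε) ((N t : ℝ)*δ + ε) := by
    intro t ht
    refine ⟨by linarith, ?_⟩
    have h1 : t ≤ max t 0 := le_max_left _ _
    have h2 : max t 0 / δ < Nat.floor (max t 0 / δ) + 1 := Nat.lt_floor_add_one _
    have h3 : max t 0 < ((N t : ℝ)) * δ := by
      rw [hN]
      push_cast
      calc max t 0 = (max t 0 / δ) * δ := by field_simp
        _ < ((Nat.floor (max t 0 / δ) : ℝ) + 1) * δ := by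
            exact mul_lt_mul_of_pos_right h2 hδpos
    linarith
  have hNmono : ∀ s t : ℝ, s ≤ t → N s ≤ N t := by
    intro s t hst
    have h1 : max s 0 / δ ≤ max t 0 / δ := by gcongr max ?_ 0 / δ
    exact Nat.add_le_add_right (Nat.floor_le_floor h1) 1
  refine ⟨fun t => uu (N t) t, δ, hδpos, ?_, ?_⟩
  · have := huu0 (N 0); simpa using this
  · intro t ht
    set M : ℕ := N (t+1) with hM
    have hglue : EqOn (fun s => uu (N s) s) (uu M) (Ioo (max (-δ) (t-1)) (t+1)) := by
      intro s hs
      have hs1 : -δ < s := lt_of_le_of_lt (le_max_left _ _) hs.1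
      have hs2 : s ≤ t + 1 := hs.2.le
      have hdomS := hdom s hs1
      have hNle : N s ≤ M := hNmono s (t+1) hs2
      have hdomM : s ∈ Ioo (-ε) ((M:ℝ)*δ + ε) := by
        refine ⟨hdomS.1, lt_of_lt_of_le hdomS.2 ?_⟩
        have : ((N s : ℝ)) ≤ (M:ℝ) := by exact_mod_cast hNle
        nlinarith
      exact hcons M (N s) s hdomS hdomM
    have hmem : t ∈ Ioo (max (-δ) (t-1)) (t+1) := by
      constructor
      · exact max_lt ht (by linarith)
      · linarith
    have hev : (fun s => uu (N s) s) =ᶠ[nhds t] uu M := by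
      filter_upwards [Ioo_mem_nhds hmem.1 hmem.2] with s hs
      exact hglue hs
    have hdomMt : t ∈ Ioo (-ε) ((M:ℝ)*δ + ε) := by
      have hdomt := hdom t ht
      refine ⟨hdomt.1, lt_of_lt_of_le hdomt.2 ?_⟩
      have : ((N t : ℝ)) ≤ (M:ℝ) := by exact_mod_cast hNmono t (t+1) (by linarith)
      nlinarith
    have hder := huu M t hdomMt
    have h2 := hder.congr_of_eventuallyEq hev
    have heqt : uu M t = uu (N t) t := hcons (N t) M t hdomMt (hdom t ht)
    rw [heqt] at h2
    simpa using h2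


lemma gdiff_bound (α₀ lam q : ℝ) (hq : 0 < q) {a b : ℝ} (ha : q ≤ a) (hb : q ≤ b) :
    |(α₀^2/a^3 + 2*lam*α₀/a) - (α₀^2/b^3 + 2*lam*α₀/b)| ≤
      (3*α₀^2/q^4 + 2 * |lam| * |α₀|/q^2) * |a - b| := by
  have ha0 : 0 < a := lt_of_lt_of_le hq ha
  have hb0 : 0 < b := lt_of_lt_of_le hq hb
  have key : (α₀^2/a^3 + 2*lam*α₀/a) - (α₀^2/b^3 + 2*lam*α₀/b)
      = (b - a) * (α₀^2*(a^2+a*b+b^2)/(a^3*b^3) + 2*lam*α₀/(a*b)) := by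
    field_simp
    ring
  rw [key, abs_mul]
  have h1 : |b - a| = |a - b| := abs_sub_comm b a
  rw [h1]
  rw [mul_comm]
  apply mul_le_mul_of_nonneg_right _ (abs_nonneg _)
  calc |α₀^2*(a^2+a*b+b^2)/(a^3*b^3) + 2*lam*α₀/(a*b)|
      ≤ |α₀^2*(a^2+a*b+b^2)/(a^3*b^3)| + |2*lam*α₀/(a*b)| := abs_add_le _ _
    _ ≤ 3*α₀^2/q^4 + 2 * |lam| * |α₀|/q^2 := by
        apply add_le_add
        · rw [abs_of_nonneg (by positivity)]
          rw [div_le_div_iff₀ (by positivity) (by positivity)]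
          have hqa3 : q^3 ≤ a^3 := pow_le_pow_left₀ hq.le ha 3
          have hqb3 : q^3 ≤ b^3 := pow_le_pow_left₀ hq.le hb 3
          have hqa2 : q^2 ≤ a^2 := pow_le_pow_left₀ hq.le ha 2
          have hqb2 : q^2 ≤ b^2 := pow_le_pow_left₀ hq.le hb 2
          have hab3 : q^4 ≤ a*b^3 := by
            calc q^4 = q*q^3 := by ring
              _ ≤ a*b^3 := mul_le_mul ha hqb3 (by positivity) ha0.le
          have ha2b2 : q^4 ≤ a^2*b^2 := by
            calc q^4 = q^2*q^2 := by ring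
              _ ≤ a^2*b^2 := mul_le_mul hqa2 hqb2 (by positivity) (by positivity)
          have ha3b : q^4 ≤ a^3*b := by
            calc q^4 = q^3*q := by ring
              _ ≤ a^3*b := mul_le_mul hqa3 hb (by positivity) (by positivity)
          nlinarith [sq_nonneg α₀, mul_pos ha0 hb0, sq_nonneg (a*b),
            mul_le_mul_of_nonneg_right hab3 (sq_nonneg a),
            mul_le_mul_of_nonneg_right ha2b2 (mul_pos ha0 hb0).le,
            mul_le_mul_of_nonneg_right ha3b (sq_nonneg b)]
        · have : |2*lam*α₀/(a*b)| = 2 * |lam| * |α₀|/(a*b) := by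
            rw [abs_div, abs_of_pos (mul_pos ha0 hb0)]
            rw [abs_mul, abs_mul]
            norm_num
          rw [this]
          have hq2 : q^2 ≤ a*b := by
            calc q^2 = q*q := by ring
              _ ≤ a*b := mul_le_mul ha hb hq.le ha0.le
          gcongr


lemma hasDerivAt_fst' {f : ℝ → ℝ×ℝ} {p : ℝ×ℝ} {t : ℝ} (h : HasDerivAt f p t) :
    HasDerivAt (fun s => (f s).1) p.1 t := by
  have h2 := (ContinuousLinearMap.fst ℝ ℝ ℝ).hasFDerivAt.comp t h.hasFDerivAt
  rw [hasDerivAt_iff_hasFDerivAt]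
  exact h2.congr_fderiv (by ext; simp)

lemma hasDerivAt_snd' {f : ℝ → ℝ×ℝ} {p : ℝ×ℝ} {t : ℝ} (h : HasDerivAt f p t) :
    HasDerivAt (fun s => (f s).2) p.2 t := by
  have h2 := (ContinuousLinearMap.snd ℝ ℝ ℝ).hasFDerivAt.comp t h.hasFDerivAt
  rw [hasDerivAt_iff_hasFDerivAt]
  exact h2.congr_fderiv (by ext; simp)

lemma claimX (α₀ β₀ lam : ℝ) (hα₀ : 0 < α₀) : ∃ d : ℝ, 0 < d ∧ d < 1 ∧
    ∀ x y : ℝ, 0 < x → x ≤ d →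
      β₀^2 + α₀^2 < y^2 + α₀^2/x^2 - 4*lam*α₀*Real.log x := by
  set E₀ : ℝ := β₀^2 + α₀^2 with hE₀
  set c : ℝ := 4 * |lam| * α₀ with hc
  have hc0 : 0 ≤ c := by positivity
  have hE0 : α₀^2 ≤ E₀ := by nlinarith [sq_nonneg β₀]
  have hE0pos : 0 < E₀ := lt_of_lt_of_le (by positivity) hE0
  set d : ℝ := min (α₀^2/(2*(c+1))) (α₀^2/(2*(E₀+1))) with hd
  have hd0 : 0 < d := lt_min (by positivity) (by positivity)
  have hd2 : d ≤ α₀^2/(2*(E₀+1)) := min_le_right _ _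
  have hdc : d ≤ α₀^2/(2*(c+1)) := min_le_left _ _
  have hd1 : d < 1 := by
    apply lt_of_le_of_lt hd2
    rw [div_lt_one (by positivity)]
    nlinarith
  refine ⟨d, hd0, hd1, ?_⟩
  intro x y hx hxd
  have hx1 : x < 1 := lt_of_le_of_lt hxd hd1
  have hlogx : Real.log x ≤ 0 := Real.log_nonpos hx.le hx1.le
  have hloginv : -Real.log x ≤ 1/x := by
    have h1 : Real.log x⁻¹ ≤ x⁻¹ - 1 := Real.log_le_sub_one_of_pos (by positivity)
    rw [Real.log_inv] at h1
    have : (0:ℝ) < x := hx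
    rw [one_div]
    linarith
  have hterm : 4*lam*α₀*Real.log x ≤ c*(1/x) := by
    calc 4 * lam * α₀ * Real.log x ≤ |4 * lam * α₀ * Real.log x| := le_abs_self _
      _ = c * (-Real.log x) := by
          rw [abs_mul, abs_mul, abs_mul, abs_of_pos hα₀, abs_of_nonpos hlogx]
          norm_num [hc]
      _ ≤ c * (1/x) := mul_le_mul_of_nonneg_left hloginv hc0
  have hcx : c*x ≤ α₀^2/2 := by
    have h1 : c*x ≤ c*d := mul_le_mul_of_nonneg_left hxd hc0
    have h2 : c*d ≤ c*(α₀^2/(2*(c+1))) := mul_le_mul_of_nonneg_left hdc hc0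
    have h3 : c*(α₀^2/(2*(c+1))) ≤ α₀^2/2 := by
      rw [mul_div_assoc', div_le_div_iff₀ (by positivity) (by norm_num)]
      nlinarith [sq_nonneg α₀]
    linarith
  have hEx : E₀*x^2 < α₀^2/2 := by
    have h4 : 2*(E₀+1)*d ≤ α₀^2 := by
      rw [← le_div_iff₀' (by positivity)]
      calc d ≤ α₀^2/(2*(E₀+1)) := hd2
        _ = α₀^2 / (2*(E₀+1)) := rfl
    nlinarith [mul_le_mul_of_nonneg_left hxd hx.le, mul_le_mul_of_nonneg_left hxd hE0pos.le]
  have hfin : E₀ < (α₀^2 - c*x)/x^2 := by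
    rw [lt_div_iff₀ (by positivity)]
    nlinarith
  have heq : (α₀^2 - c*x)/x^2 = α₀^2/x^2 - c*(1/x) := by
    field_simp
  have hy : (0:ℝ) ≤ y^2 := sq_nonneg y
  rw [hE₀] at hfin ⊢
  rw [heq] at hfin
  linarith

lemma lipF (α₀ lam q : ℝ) (hq : 0 < q) :
    ∃ K : ℝ≥0, LipschitzWith K
      (fun p : ℝ×ℝ => (p.2, α₀^2/(max p.1 q)^3 + 2*lam*α₀/(max p.1 q))) := by
  set L : ℝ := 3*α₀^2/q^4 + 2 * |lam| * |α₀| / q^2 with hL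
  have hL0 : 0 ≤ L := by positivity
  have hG : LipschitzWith ⟨L, hL0⟩ (fun x : ℝ => α₀^2/(max x q)^3 + 2*lam*α₀/(max x q)) := by
    apply LipschitzWith.of_dist_le_mul
    intro x y
    have h1 := gdiff_bound α₀ lam q hq (le_max_right x q) (le_max_right y q)
    have h2 : |max x q - max y q| ≤ |x - y| := abs_max_sub_max_le_abs x y q
    calc dist (α₀^2/(max x q)^3 + 2*lam*α₀/(max x q)) (α₀^2/(max y q)^3 + 2*lam*α₀/(max y q))
        = |(α₀^2/(max x q)^3 + 2*lam*α₀/(max x q)) - (α₀^2/(max y q)^3 + 2*lam*α₀/(max y q))| :=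
          Real.dist_eq _ _
      _ ≤ L * |max x q - max y q| := h1
      _ ≤ L * |x - y| := mul_le_mul_of_nonneg_left h2 hL0
      _ = L * dist x y := by rw [Real.dist_eq]
  exact ⟨_, LipschitzWith.prodMk LipschitzWith.prod_snd (hG.comp LipschitzWith.prod_fst)⟩


theorem gaussian_width_ode (α₀ β₀ lam : ℝ) (hα₀ : 0 < α₀) :
    ∃ r : ℝ → ℝ, r 0 = 1 ∧ deriv r 0 = -β₀ ∧
      (∃ δ : ℝ, 0 < δ ∧ ∀ t : ℝ, 0 ≤ t → δ ≤ r t) ∧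
      (∀ t : ℝ, 0 ≤ t →
        deriv (deriv r) t = α₀ ^ 2 / r t ^ 3 + 2 * lam * α₀ / r t) ∧
      ∀ t : ℝ, 0 ≤ t →
        (deriv r t) ^ 2 = β₀ ^ 2 + α₀ ^ 2 - α₀ ^ 2 / r t ^ 2 + 4 * lam * α₀ * Real.log (r t) := by
  obtain ⟨d, hd0, hd1, hX⟩ := claimX α₀ β₀ lam hα₀
  set q : ℝ := d/2 with hq
  have hq0 : 0 < q := by positivity
  have hqd : q ≤ d := by rw [hq]; linarith
  obtain ⟨K, hF⟩ := lipF α₀ lam q hq0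
  obtain ⟨u, cδ, hcδ, hu0, hu⟩ := global_sol hF (1, -β₀)
  set r : ℝ → ℝ := fun t => (u t).1 with hr
  set v : ℝ → ℝ := fun t => (u t).2 with hv
  have hr0 : r 0 = 1 := by rw [hr]; simp only [hu0]
  have hv0 : v 0 = -β₀ := by rw [hv]; simp only [hu0]
  have hrd : ∀ t : ℝ, -cδ < t → HasDerivAt r (v t) t := fun t ht => hasDerivAt_fst' (hu t ht)
  have hvd : ∀ t : ℝ, -cδ < t →
      HasDerivAt v (α₀^2/(max (r t) q)^3 + 2*lam*α₀/(max (r t) q)) t :=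
    fun t ht => hasDerivAt_snd' (hu t ht)
  set En : ℝ → ℝ := fun s => (v s)^2 + α₀^2/(r s)^2 - 4*lam*α₀*Real.log (r s) with hEn
  have hEderiv : ∀ s : ℝ, -cδ < s → q ≤ r s → HasDerivAt En 0 s := by
    intro s hs hqr
    have hrpos : 0 < r s := lt_of_lt_of_le hq0 hqr
    have hmax : max (r s) q = r s := max_eq_left hqr
    have hr' := hrd s hs
    have hv' := hvd s hs
    rw [hmax] at hv'
    have H1 : HasDerivAt (fun s => (v s)^2)
        (2 * v s * (α₀^2/(r s)^3 + 2*lam*α₀/(r s))) s := by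
      have := hv'.pow 2
      refine this.congr_deriv ?_
      push_cast
      ring
    have H2 := (hasDerivAt_const s (α₀^2)).div (hr'.pow 2) (pow_ne_zero 2 hrpos.ne')
    have H3 : HasDerivAt (fun s => Real.log (r s)) (v s / r s) s := hr'.log hrpos.ne'
    have Htot := (H1.add H2).sub (H3.const_mul (4*lam*α₀))
    rw [hEn]
    refine Htot.congr_deriv ?_
    have hne : r s ≠ 0 := hrpos.ne'
    push_cast
    simp only [Pi.pow_apply]
    field_simp
    ring
  have hEcons : ∀ T : ℝ, 0 ≤ T → (∀ s : ℝ, 0 ≤ s → s ≤ T → q ≤ r s) → En T = En 0 := by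
    intro T hT hlo
    have hcont : ContinuousOn En (Icc 0 T) := fun s hs =>
      ((hEderiv s (by linarith [hs.1]) (hlo s hs.1 hs.2)).continuousAt).continuousWithinAt
    exact constant_of_has_deriv_right_zero hcont
      (fun s hs => (hEderiv s (by linarith [hs.1]) (hlo s hs.1 hs.2.le)).hasDerivWithinAt)
      T (right_mem_Icc.mpr hT)
  have hEn0 : En 0 = β₀^2 + α₀^2 := by
    rw [hEn]
    simp only [hr0, hv0]
    norm_num
  have hlow : ∀ t : ℝ, 0 ≤ t → d < r t := by
    by_contra hcon
    push_neg at hcon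
    obtain ⟨t₁, ht₁0, ht₁d⟩ := hcon
    set S : Set ℝ := {t | 0 ≤ t ∧ r t ≤ d} with hS
    have hSne : S.Nonempty := ⟨t₁, ht₁0, ht₁d⟩
    have hSbd : BddBelow S := ⟨0, fun x hx => hx.1⟩
    have hScl : IsClosed S := by
      have hSeq : S = Ici 0 ∩ r ⁻¹' (Iic d) := by
        ext t
        simp [hS, mem_Ici, mem_Iic]
      rw [hSeq]
      apply ContinuousOn.preimage_isClosed_of_isClosed ?_ isClosed_Ici isClosed_Iic
      intro s hs
      exact ((hrd s (by simp only [mem_Ici] at hs; linarith)).continuousAt).continuousWithinAt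
    set τ : ℝ := sInf S with hτ
    have hτS : τ ∈ S := hScl.csInf_mem hSne hSbd
    have hτ0 : 0 ≤ τ := hτS.1
    have hτd : r τ ≤ d := hτS.2
    have hτpos : 0 < τ := by
      rcases eq_or_lt_of_le hτ0 with h | h
      · exfalso
        rw [← h, hr0] at hτd
        linarith
      · exact h
    have hbelow : ∀ s : ℝ, 0 ≤ s → s < τ → d < r s := by
      intro s hs0 hsτ
      by_contra hcon2
      push_neg at hcon2
      have : τ ≤ s := csInf_le hSbd ⟨hs0, hcon2⟩
      linarith
    have hgeτ : d ≤ r τ := by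
      have htend : Filter.Tendsto r (nhdsWithin τ (Iio τ)) (nhds (r τ)) :=
        ((hrd τ (by linarith)).continuousAt).continuousWithinAt.tendsto
      apply ge_of_tendsto htend
      filter_upwards [Ioo_mem_nhdsLT_of_mem (show τ ∈ Ioc 0 τ from ⟨hτpos, le_rfl⟩)] with s hs
      exact (hbelow s hs.1.le hs.2).le
    have hEτ : En τ = En 0 := by
      apply hEcons τ hτ0
      intro s hs0 hsτ
      rcases eq_or_lt_of_le hsτ with h | h
      · rw [h]; linarith
      · linarith [hbelow s hs0 h]
    have hXτ := hX (r τ) (v τ) (by linarith) hτd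
    have hEnτ : En τ = β₀^2 + α₀^2 := by rw [hEτ, hEn0]
    rw [hEn] at hEnτ
    simp only at hEnτ
    linarith
  refine ⟨r, hr0, ?_, ⟨d, hd0, fun t ht => (hlow t ht).le⟩, ?_, ?_⟩
  · rw [(hrd 0 (by linarith)).deriv, hv0]
  · intro t ht
    have hderiv_eq : deriv r =ᶠ[nhds t] v := by
      filter_upwards [Ioi_mem_nhds (show -cδ < t by linarith)] with s hs
      exact (hrd s hs).deriv
    have h1 : deriv (deriv r) t = deriv v t := hderiv_eq.deriv_eq
    have hmax : max (r t) q = r t := max_eq_left (by linarith [hlow t ht])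
    have h2 : deriv v t = α₀^2/(r t)^3 + 2*lam*α₀/(r t) := by
      have h3 := (hvd t (by linarith)).deriv
      rw [hmax] at h3
      exact h3
    rw [h1, h2]
  · intro t ht
    have hEt : En t = En 0 := hEcons t ht (fun s hs0 _ => by linarith [hlow s hs0])
    rw [hEn0] at hEt
    have hrteq : deriv r t = v t := (hrd t (by linarith)).deriv
    rw [hrteq]
    rw [hEn] at hEt
    simp only at hEt
    linarith
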